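/- In the HNN extension K of D_n = ⟨A, B⟩ by T with T B T⁻¹ = A B, where n ≥ 2 is even, the subgroup Γ generated by the conjugates Aᵏ T A⁻ᵏ (k = 0, …, n−1) has index 2n in K, is a free group of rank n, but is not a normal subgroup of K. -/

import Mathlib

open HNNExtension

namespace HNNSchottky

open DihedralGroup Subgroup

theorem chain'_of_no_split {α : Type*} :
    ∀ (M : List (α × Bool)),
      (∀ (L₁ L₂ : List (α × Bool)) (x : α) (b : Bool), M ≠ L₁ ++ (x, b) :: (x, !b) :: L₂) →
      M.Chain' (fun p q => p.1 = q.1 → q.2 ≠ !p.2)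
  | [], _ => List.isChain_nil
  | [_], _ => List.isChain_singleton _
  | p :: q :: tl, h => by
    refine List.isChain_cons_cons.2 ⟨fun h1 h2 => ?_, chain'_of_no_split (q :: tl)
      (fun L₁ L₂ x b hh => h (p :: L₁) L₂ x b (by rw [hh]; rfl))⟩
    refine h [] tl p.1 p.2 ?_
    have hq : q = (p.1, !p.2) := Prod.ext h1.symm h2
    rw [hq]
    simp

theorem toWord_chain' {α : Type*} [DecidableEq α] (w : FreeGroup α) :
    w.toWord.Chain' (fun p q => p.1 = q.1 → q.2 ≠ !p.2) :=
  chain'_of_no_split _ (fun L₁ L₂ x b hh =>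
    FreeGroup.reduce.not ((FreeGroup.reduce_toWord w).trans hh))

theorem mem_closure_of_sq {G : Type*} [Group G] {g x : G} (hg : g * g = 1)
    (hx : x ∈ closure ({g} : Set G)) : x = 1 ∨ x = g := by
  rw [← zpowers_eq_closure, mem_zpowers_iff] at hx
  obtain ⟨k, rfl⟩ := hx
  have hg2 : g ^ (2 : ℤ) = 1 := by rw [zpow_two, hg]
  rcases Int.even_or_odd k with ⟨m, rfl⟩ | ⟨m, rfl⟩
  · left
    rw [← two_mul, zpow_mul, hg2, one_zpow]
  · right
    rw [zpow_add, zpow_mul, hg2, one_zpow, one_mul, zpow_one]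

variable {n : ℕ}

theorem r_mem_A {j : ZMod n} (h : r j ∈ closure ({sr 0} : Set (DihedralGroup n))) :
    j = 0 := by
  rcases mem_closure_of_sq (sr_mul_self 0) h with h1 | h1
  · rw [one_def] at h1
    exact r.inj h1
  · exact absurd h1 (by simp)

theorem r_mem_B {j : ZMod n}
    (h : r j ∈ closure ({r 1 * sr 0} : Set (DihedralGroup n))) : j = 0 := by
  have he : (r 1 * sr 0 : DihedralGroup n) * (r 1 * sr 0) = 1 := by
    rw [r_mul_sr, sr_mul_self]
  rcases mem_closure_of_sq he h with h1 | h1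
  · rw [one_def] at h1
    exact r.inj h1
  · rw [r_mul_sr] at h1
    exact absurd h1 (by simp)

theorem r_neg (i : ZMod n) : (r (-i) : DihedralGroup n) = (r i)⁻¹ :=
  eq_inv_of_mul_eq_one_left (by rw [r_mul_r, neg_add_cancel, one_def])

section HNN

variable (φ : (Subgroup.closure {DihedralGroup.sr 0} : Subgroup (DihedralGroup n)) ≃*
      (Subgroup.closure {DihedralGroup.r 1 * DihedralGroup.sr 0} : Subgroup (DihedralGroup n)))

/-- The stable-letter conjugates. -/
def X (m : ℤ) : HNNExtension (DihedralGroup n) _ _ φ :=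
  HNNExtension.of (r 1) ^ m * t * HNNExtension.of (r 1) ^ (-m)

theorem X_def (m : ℤ) : X φ m = HNNExtension.of (r 1) ^ m * t * HNNExtension.of (r 1) ^ (-m) := rfl

/-- `HNNExtension.of (sr 0)`. -/
def sK : HNNExtension (DihedralGroup n) _ _ φ := HNNExtension.of (sr 0)

theorem s_mul_s : sK φ * sK φ = 1 := by
  rw [sK, ← map_mul, sr_mul_self, map_one]

theorem s_conj : sK φ * HNNExtension.of (r 1) * (sK φ)⁻¹ = (HNNExtension.of (r 1))⁻¹ := by
  have h0 : (sr (0 : ZMod n))⁻¹ = sr 0 := inv_eq_of_mul_eq_one_right (sr_mul_self 0)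
  simp only [sK, ← map_inv, ← map_mul]
  congr 1
  rw [h0, ← r_neg]
  simp

theorem s_mul_a_zpow (u : ℤ) :
    sK φ * HNNExtension.of (r 1) ^ u = HNNExtension.of (r 1) ^ (-u) * sK φ := by
  have h : (HNNExtension.of (r 1) : HNNExtension (DihedralGroup n) _ _ φ) ^ (-u) =
      sK φ * HNNExtension.of (r 1) ^ u * (sK φ)⁻¹ := by
    rw [zpow_neg, ← inv_zpow, ← s_conj φ, conj_zpow]
  rw [h]
  group

theorem X_mem_closure (hn : 0 < n) (m : ℤ) :
    X φ m ∈ Subgroup.closure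
      { x | ∃ k : ℕ, k < n ∧
          x = (HNNExtension.of (DihedralGroup.r 1)) ^ k * HNNExtension.t *
              ((HNNExtension.of (DihedralGroup.r 1)) ^ k)⁻¹ } := by
  have han : (HNNExtension.of (r 1) : HNNExtension (DihedralGroup n) _ _ φ) ^ (n : ℤ) = 1 := by
    rw [zpow_natCast, ← map_pow, r_one_pow_n, map_one]
  have hmod : ∀ j : ℤ, (HNNExtension.of (r 1) : HNNExtension (DihedralGroup n) _ _ φ) ^ j =
      HNNExtension.of (r 1) ^ (j % n) := by
    intro j
    conv_lhs => rw [← Int.mul_ediv_add_emod j n]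
    rw [zpow_add, zpow_mul, han, one_zpow, one_mul]
  set k : ℕ := (m % n).toNat with hk
  have hknn : ((k : ℤ)) = m % n := Int.toNat_of_nonneg (Int.emod_nonneg m (by exact_mod_cast hn.ne'))
  have hkn : k < n := by
    have := Int.emod_lt_of_pos m (b := n) (by exact_mod_cast hn)
    omega
  apply Subgroup.subset_closure
  refine ⟨k, hkn, ?_⟩
  rw [X_def, hmod, ← hknn, zpow_natCast, zpow_neg, hmod, ← hknn, zpow_natCast]

theorem X_mul_a (m u : ℤ) : X φ m * HNNExtension.of (r 1) ^ u = HNNExtension.of (r 1) ^ u * X φ (m - u) := by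
  simp only [X_def]; group

theorem X_inv_mul_a (m u : ℤ) :
    (X φ m)⁻¹ * HNNExtension.of (r 1) ^ u = HNNExtension.of (r 1) ^ u * (X φ (m - u))⁻¹ := by
  simp only [X_def]; group

/-- The subgroup generated by the conjugates. -/
def Gam : Subgroup (HNNExtension (DihedralGroup n) _ _ φ) :=
  Subgroup.closure
      { x | ∃ k : ℕ, k < n ∧
          x = (HNNExtension.of (DihedralGroup.r 1)) ^ k * HNNExtension.t *
              ((HNNExtension.of (DihedralGroup.r 1)) ^ k)⁻¹ }

theorem X_natCast (k : ℕ) :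
    X φ (k : ℤ) = HNNExtension.of (r 1) ^ k * t * (HNNExtension.of (r 1) ^ k)⁻¹ := by
  rw [X_def, zpow_natCast, zpow_neg, zpow_natCast]

theorem X_mem_Gam (hn : 0 < n) (m : ℤ) : X φ m ∈ Gam φ :=
  X_mem_closure φ hn m

/-- The set `of(Dₙ) * Γ`. -/
def Pcar : Set (HNNExtension (DihedralGroup n) _ _ φ) :=
  { g | ∃ (d : DihedralGroup n) (γ : HNNExtension (DihedralGroup n) _ _ φ),
      γ ∈ Gam φ ∧ g = HNNExtension.of d * γ }

theorem mem_Pcar {g : HNNExtension (DihedralGroup n) _ _ φ} :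
    g ∈ Pcar φ ↔ ∃ (d : DihedralGroup n) (γ : HNNExtension (DihedralGroup n) _ _ φ),
      γ ∈ Gam φ ∧ g = HNNExtension.of d * γ := Iff.rfl

theorem of_r_eq [NeZero n] (j : ZMod n) :
    (HNNExtension.of (r j) : HNNExtension (DihedralGroup n) _ _ φ) = HNNExtension.of (r 1) ^ (j.val : ℤ) := by
  rw [zpow_natCast, ← map_pow, r_one_pow, ZMod.natCast_rightInverse j]

theorem of_sr_eq [NeZero n] (j : ZMod n) :
    (HNNExtension.of (sr j) : HNNExtension (DihedralGroup n) _ _ φ) = sK φ * HNNExtension.of (r 1) ^ (j.val : ℤ) := by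
  have h : (sr j : DihedralGroup n) = sr 0 * r j := by rw [sr_mul_r, zero_add]
  rw [h, map_mul, of_r_eq, sK]


variable (hφ : (φ ⟨DihedralGroup.sr 0, Subgroup.subset_closure (Set.mem_singleton _)⟩ :
        DihedralGroup n) = DihedralGroup.r 1 * DihedralGroup.sr 0)

include hφ

theorem t_mul_s : (t : HNNExtension (DihedralGroup n) _ _ φ) * sK φ =
    sK φ * (HNNExtension.of (r 1))⁻¹ * t := by
  have h := t_mul_of (φ := φ) ⟨sr 0, Subgroup.subset_closure (Set.mem_singleton _)⟩
  rw [hφ] at h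
  rw [sK, h]
  congr 1
  rw [← map_inv, ← map_mul]
  congr 1
  rw [← r_neg]
  simp

theorem t_inv_mul_s : (t : HNNExtension (DihedralGroup n) _ _ φ)⁻¹ * sK φ =
    sK φ * t⁻¹ * HNNExtension.of (r 1) := by
  calc t⁻¹ * sK φ = t⁻¹ * (sK φ * (HNNExtension.of (r 1))⁻¹ * t) * t⁻¹ * HNNExtension.of (r 1) := by group
    _ = t⁻¹ * (t * sK φ) * t⁻¹ * HNNExtension.of (r 1) := by rw [t_mul_s φ hφ]
    _ = sK φ * t⁻¹ * HNNExtension.of (r 1) := by group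


theorem X_mul_s (m : ℤ) :
    X φ m * sK φ = sK φ * X φ (-(m + 1)) * (HNNExtension.of (r 1))⁻¹ := by
  calc X φ m * sK φ = HNNExtension.of (r 1) ^ m * t * (HNNExtension.of (r 1) ^ (-m) * sK φ) := by
        simp only [X_def]; group
    _ = HNNExtension.of (r 1) ^ m * t * (sK φ * HNNExtension.of (r 1) ^ m) := by
        rw [← s_mul_a_zpow φ m]
    _ = HNNExtension.of (r 1) ^ m * (t * sK φ) * HNNExtension.of (r 1) ^ m := by group
    _ = HNNExtension.of (r 1) ^ m * (sK φ * (HNNExtension.of (r 1))⁻¹ * t) * HNNExtension.of (r 1) ^ m := by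
        rw [t_mul_s φ hφ]
    _ = HNNExtension.of (r 1) ^ (-(-m)) * sK φ * ((HNNExtension.of (r 1))⁻¹ * t * HNNExtension.of (r 1) ^ m) := by group
    _ = sK φ * HNNExtension.of (r 1) ^ (-m) * ((HNNExtension.of (r 1))⁻¹ * t * HNNExtension.of (r 1) ^ m) := by
        rw [← s_mul_a_zpow φ (-m)]
    _ = sK φ * X φ (-(m + 1)) * (HNNExtension.of (r 1))⁻¹ := by simp only [X_def]; group

theorem X_inv_mul_s (m : ℤ) :
    (X φ m)⁻¹ * sK φ = sK φ * (X φ (-m))⁻¹ * HNNExtension.of (r 1) := by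
  calc (X φ m)⁻¹ * sK φ = HNNExtension.of (r 1) ^ m * t⁻¹ * (HNNExtension.of (r 1) ^ (-m) * sK φ) := by
        simp only [X_def]; group
    _ = HNNExtension.of (r 1) ^ m * t⁻¹ * (sK φ * HNNExtension.of (r 1) ^ m) := by rw [← s_mul_a_zpow φ m]
    _ = HNNExtension.of (r 1) ^ m * (t⁻¹ * sK φ) * HNNExtension.of (r 1) ^ m := by group
    _ = HNNExtension.of (r 1) ^ m * (sK φ * t⁻¹ * HNNExtension.of (r 1)) * HNNExtension.of (r 1) ^ m := by
        rw [t_inv_mul_s φ hφ]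
    _ = HNNExtension.of (r 1) ^ (-(-m)) * sK φ * (t⁻¹ * HNNExtension.of (r 1) * HNNExtension.of (r 1) ^ m) := by group
    _ = sK φ * HNNExtension.of (r 1) ^ (-m) * (t⁻¹ * HNNExtension.of (r 1) * HNNExtension.of (r 1) ^ m) := by
        rw [← s_mul_a_zpow φ (-m)]
    _ = sK φ * (X φ (-m))⁻¹ * HNNExtension.of (r 1) := by simp only [X_def]; group

theorem X_shift [NeZero n] (hn : 0 < n) (m : ℤ) (d : DihedralGroup n) :
    X φ m * HNNExtension.of d ∈ Pcar φ ∧ (X φ m)⁻¹ * HNNExtension.of d ∈ Pcar φ := by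
  cases d with
  | r j =>
    refine ⟨⟨r j, X φ (m - (j.val : ℤ)), X_mem_Gam φ hn _, ?_⟩,
      ⟨r j, (X φ (m - (j.val : ℤ)))⁻¹, inv_mem (X_mem_Gam φ hn _), ?_⟩⟩
    · rw [of_r_eq φ j]; exact X_mul_a φ m _
    · rw [of_r_eq φ j]; exact X_inv_mul_a φ m _
  | sr j =>
    set v : ℤ := (j.val : ℤ) with hv
    refine ⟨⟨sr 0 * r 1 ^ (v - 1), X φ (-(m + 1) - (v - 1)), X_mem_Gam φ hn _, ?_⟩,
      ⟨sr 0 * r 1 ^ (v + 1), (X φ (-m - (v + 1)))⁻¹, inv_mem (X_mem_Gam φ hn _), ?_⟩⟩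
    · calc X φ m * HNNExtension.of (sr j) = X φ m * sK φ * HNNExtension.of (r 1) ^ v := by
            rw [of_sr_eq φ j]; group; rw [hv]
        _ = sK φ * X φ (-(m + 1)) * (HNNExtension.of (r 1))⁻¹ * HNNExtension.of (r 1) ^ v := by
            rw [X_mul_s φ hφ m]
        _ = sK φ * (X φ (-(m + 1)) * HNNExtension.of (r 1) ^ (v - 1)) := by group
        _ = sK φ * (HNNExtension.of (r 1) ^ (v - 1) * X φ (-(m + 1) - (v - 1))) := by
            rw [X_mul_a]
        _ = HNNExtension.of (sr 0 * r 1 ^ (v - 1)) * X φ (-(m + 1) - (v - 1)) := by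
            rw [map_mul, map_zpow, ← sK]; group
    · calc (X φ m)⁻¹ * HNNExtension.of (sr j) = (X φ m)⁻¹ * sK φ * HNNExtension.of (r 1) ^ v := by
            rw [of_sr_eq φ j]; group; rw [hv]
        _ = sK φ * (X φ (-m))⁻¹ * HNNExtension.of (r 1) * HNNExtension.of (r 1) ^ v := by
            rw [X_inv_mul_s φ hφ m]
        _ = sK φ * ((X φ (-m))⁻¹ * HNNExtension.of (r 1) ^ (v + 1)) := by group
        _ = sK φ * (HNNExtension.of (r 1) ^ (v + 1) * (X φ (-m - (v + 1)))⁻¹) := by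
            rw [X_inv_mul_a]
        _ = HNNExtension.of (sr 0 * r 1 ^ (v + 1)) * (X φ (-m - (v + 1)))⁻¹ := by
            rw [map_mul, map_zpow, ← sK]; group

theorem gam_shift [NeZero n] (hn : 0 < n) :
    ∀ γ ∈ Gam φ, ∀ d : DihedralGroup n,
      γ * HNNExtension.of d ∈ Pcar φ ∧ γ⁻¹ * HNNExtension.of d ∈ Pcar φ := by
  let P2 : Subgroup (HNNExtension (DihedralGroup n) _ _ φ) :=
    { carrier := {g | (∀ d, g * HNNExtension.of d ∈ Pcar φ) ∧ (∀ d, g⁻¹ * HNNExtension.of d ∈ Pcar φ)}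
      one_mem' := ⟨fun d => ⟨d, 1, one_mem _, by rw [one_mul, mul_one]⟩, fun d => ⟨d, 1, one_mem _, by rw [inv_one, one_mul, mul_one]⟩⟩
      mul_mem' := by
        rintro x y hx hy
        constructor
        · intro d
          obtain ⟨d', γ', hγ', he⟩ := hy.1 d
          obtain ⟨d'', γ'', hγ'', he'⟩ := hx.1 d'
          exact ⟨d'', γ'' * γ', mul_mem hγ'' hγ',
            by rw [mul_assoc, he, ← mul_assoc, he']; group⟩
        · intro d
          obtain ⟨d', γ', hγ', he⟩ := hx.2 d
          obtain ⟨d'', γ'', hγ'', he'⟩ := hy.2 d'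
          exact ⟨d'', γ'' * γ', mul_mem hγ'' hγ',
            by rw [mul_inv_rev, mul_assoc, he, ← mul_assoc, he']; group⟩
      inv_mem' := by
        rintro x hx
        exact ⟨hx.2, by rw [inv_inv]; exact hx.1⟩ }
  have hle : Gam φ ≤ P2 := by
    rw [Gam]
    refine (Subgroup.closure_le _).2 ?_
    rintro x ⟨k, hk, rfl⟩
    rw [← X_natCast]
    exact ⟨fun d => (X_shift φ hφ hn _ d).1, fun d => (X_shift φ hφ hn _ d).2⟩
  exact fun γ hγ d => ⟨(hle hγ).1 d, (hle hγ).2 d⟩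

theorem all_mem_Pcar [NeZero n] (hn : 0 < n) :
    ∀ g : HNNExtension (DihedralGroup n) _ _ φ, g ∈ Pcar φ := by
  intro g
  refine HNNExtension.induction_on g ?_ ?_ ?_ ?_
  · exact fun d => ⟨d, 1, one_mem _, by rw [mul_one]⟩
  · exact ⟨1, X φ 0, X_mem_Gam φ hn 0, by rw [X_def, neg_zero, zpow_zero, map_one, one_mul, one_mul, mul_one]⟩
  · rintro x y ⟨d1, γ1, hγ1, rfl⟩ ⟨d2, γ2, hγ2, rfl⟩
    obtain ⟨d', γ', hγ', he⟩ := (gam_shift φ hφ hn γ1 hγ1 d2).1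
    exact ⟨d1 * d', γ' * γ2, mul_mem hγ' hγ2, by
      rw [map_mul]
      calc HNNExtension.of d1 * γ1 * (HNNExtension.of d2 * γ2) = HNNExtension.of d1 * (γ1 * HNNExtension.of d2) * γ2 := by group
        _ = HNNExtension.of d1 * (HNNExtension.of d' * γ') * γ2 := by rw [he]
        _ = HNNExtension.of d1 * HNNExtension.of d' * (γ' * γ2) := by group⟩
  · rintro x ⟨d1, γ1, hγ1, rfl⟩
    obtain ⟨d', γ', hγ', he⟩ := (gam_shift φ hφ hn γ1 hγ1 d1⁻¹).2
    exact ⟨d', γ', hγ', by rw [← he, map_inv]; group⟩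

end HNN

section Words

variable (n) in
/-- Auxiliary exponent. -/
def eu (b : Bool) : ℤˣ := if b then 1 else -1

variable (n) in
/-- Head of the reduced word associated to a free word. -/
def wHead : List (Fin n × Bool) → DihedralGroup n
  | [] => 1
  | (k, _) :: _ => r ((k : ℕ) : ZMod n)

variable (n) in
/-- List of the reduced word associated to a free word. -/
def wList : List (Fin n × Bool) → List (ℤˣ × DihedralGroup n)
  | [] => []
  | (k, b) :: L => (eu b, r (-((k : ℕ) : ZMod n)) * wHead n L) :: wList L

theorem eu_true : eu true = 1 := rfl
theorem eu_false : eu false = -1 := rfl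
theorem wHead_nil : wHead n [] = 1 := rfl
theorem wHead_cons (k : Fin n) (b : Bool) (L : List (Fin n × Bool)) :
    wHead n ((k, b) :: L) = r ((k : ℕ) : ZMod n) := rfl
theorem wList_nil : wList n [] = [] := rfl
theorem wList_cons (k : Fin n) (b : Bool) (L : List (Fin n × Bool)) :
    wList n ((k, b) :: L) = (eu b, r (-((k : ℕ) : ZMod n)) * wHead n L) :: wList n L := rfl

variable (φ : (Subgroup.closure {DihedralGroup.sr 0} : Subgroup (DihedralGroup n)) ≃*
      (Subgroup.closure {DihedralGroup.r 1 * DihedralGroup.sr 0} : Subgroup (DihedralGroup n)))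

theorem prod_eq : ∀ L : List (Fin n × Bool),
    HNNExtension.of (wHead n L) *
      ((wList n L).map (fun x => (t : HNNExtension (DihedralGroup n) _ _ φ) ^ (x.1 : ℤ) *
        HNNExtension.of x.2)).prod =
    FreeGroup.lift (fun k : Fin n => X φ ((k : ℕ) : ℤ)) (FreeGroup.mk L)
  | [] => by rw [wHead_nil, wList_nil, List.map_nil, List.prod_nil, map_one, mul_one, ← FreeGroup.one_eq_mk, map_one]
  | (k, b) :: L => by
    have ih := prod_eq L
    have hofr : (HNNExtension.of (r ((k : ℕ) : ZMod n)) :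
        HNNExtension (DihedralGroup n) _ _ φ) = HNNExtension.of (r 1) ^ ((k : ℕ) : ℤ) := by
      rw [zpow_natCast, ← map_pow, r_one_pow]
    have hofrn : (HNNExtension.of (r (-((k : ℕ) : ZMod n))) :
        HNNExtension (DihedralGroup n) _ _ φ) = HNNExtension.of (r 1) ^ (-((k : ℕ) : ℤ)) := by
      rw [r_neg, map_inv, hofr, zpow_neg]
    have hmk : FreeGroup.mk ((k, b) :: L) = FreeGroup.mk [(k, b)] * FreeGroup.mk L := by
      rw [FreeGroup.mul_mk, List.singleton_append]
    have h1 : FreeGroup.lift (fun k : Fin n => X φ ((k : ℕ) : ℤ)) (FreeGroup.mk [(k, b)]) =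
        cond b (X φ ((k : ℕ) : ℤ)) (X φ ((k : ℕ) : ℤ))⁻¹ := by
      rw [FreeGroup.lift_mk]
      rw [List.map_cons, List.map_nil, List.prod_singleton]
    simp only [wList_cons, wHead_cons, List.map_cons, List.prod_cons]
    rw [hmk, map_mul, map_mul, h1, ← ih, hofrn, hofr]
    cases b with
    | true =>
      simp only [eu_true, cond, Units.val_one, zpow_one, X_def]
      group
    | false =>
      simp only [eu_false, cond, Units.val_neg, Units.val_one, X_def]
      group

theorem wList_chain' [NeZero n] : ∀ L : List (Fin n × Bool),
    L.Chain' (fun p q => p.1 = q.1 → q.2 ≠ !p.2) →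
    (wList n L).Chain' (fun a b => a.2 ∈ toSubgroup (Subgroup.closure {sr 0})
      (Subgroup.closure {r 1 * sr 0}) a.1 → a.1 = b.1)
  | [] => fun _ => List.isChain_nil
  | [(k, b)] => fun _ => by simp only [wList]; exact List.isChain_singleton _
  | (k₁, b₁) :: (k₂, b₂) :: L => fun h => by
    obtain ⟨h1, h2⟩ := List.isChain_cons_cons.1 h
    refine List.isChain_cons_cons.2 ⟨?_, wList_chain' ((k₂, b₂) :: L) h2⟩
    intro hmem
    rw [wHead, r_mul_r] at hmem
    have hj : (-((k₁ : ℕ) : ZMod n) + ((k₂ : ℕ) : ZMod n)) = 0 := by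
      cases b₁ with
      | true =>
        rw [eu_true] at hmem
        exact r_mem_A hmem
      | false =>
        rw [eu_false] at hmem
        exact r_mem_B hmem
    have hk : k₁ = k₂ := by
      have hcast : ((k₁ : ℕ) : ZMod n) = ((k₂ : ℕ) : ZMod n) := neg_add_eq_zero.mp hj
      have hval := congrArg ZMod.val hcast
      rw [ZMod.val_cast_of_lt k₁.2, ZMod.val_cast_of_lt k₂.2] at hval
      exact Fin.ext hval
    have hb : b₁ = b₂ := by
      have := h1 hk
      cases b₁ <;> cases b₂ <;> simp_all
    rw [hk, hb]

theorem wList_eq_nil : ∀ {L : List (Fin n × Bool)}, wList n L = [] → L = []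
  | [], _ => rfl
  | (k, b) :: L, h => by simp [wList] at h

theorem lift_eq_one_of_mem_range [NeZero n] (w : FreeGroup (Fin n))
    (h : FreeGroup.lift (fun k : Fin n => X φ ((k : ℕ) : ℤ)) w ∈
      (HNNExtension.of.range : Subgroup (HNNExtension (DihedralGroup n) _ _ φ))) :
    w = 1 := by
  set L := w.toWord with hL
  have hch := wList_chain' L (toWord_chain' w)
  let W : HNNExtension.NormalWord.ReducedWord (DihedralGroup n) (Subgroup.closure {sr 0})
      (Subgroup.closure {r 1 * sr 0}) := ⟨wHead n L, wList n L, hch⟩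
  have hprod : W.prod φ = FreeGroup.lift (fun k : Fin n => X φ ((k : ℕ) : ℤ)) w := by
    rw [HNNExtension.NormalWord.ReducedWord.prod]
    exact (prod_eq φ L).trans (by rw [hL, FreeGroup.mk_toWord])
  have hnil := HNNExtension.ReducedWord.toList_eq_nil_of_mem_of_range φ W (by rw [hprod]; exact h)
  have hLnil : L = [] := wList_eq_nil hnil
  rw [hL] at hLnil
  exact FreeGroup.toWord_eq_nil_iff.mp hLnil

end Words
section Final

variable (φ : (Subgroup.closure {DihedralGroup.sr 0} : Subgroup (DihedralGroup n)) ≃*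
      (Subgroup.closure {DihedralGroup.r 1 * DihedralGroup.sr 0} : Subgroup (DihedralGroup n)))

theorem gam_eq_range :
    (FreeGroup.lift (fun k : Fin n => X φ ((k : ℕ) : ℤ))).range = Gam φ := by
  rw [FreeGroup.range_lift_eq_closure, Gam]
  congr 1
  ext x
  constructor
  · rintro ⟨k, rfl⟩
    exact ⟨(k : ℕ), k.2, X_natCast φ (k : ℕ)⟩
  · rintro ⟨k, hk, rfl⟩
    exact ⟨⟨k, hk⟩, X_natCast φ k⟩

theorem inj_lift [NeZero n] :
    Function.Injective (FreeGroup.lift (fun k : Fin n => X φ ((k : ℕ) : ℤ)) :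
      FreeGroup (Fin n) →* HNNExtension (DihedralGroup n) _ _ φ) := by
  rw [injective_iff_map_eq_one]
  intro w hw
  exact lift_eq_one_of_mem_range φ w (by rw [hw]; exact ⟨1, map_one _⟩)

theorem of_mem_Gam [NeZero n] {d : DihedralGroup n}
    (hd : HNNExtension.of d ∈ Gam φ) : d = 1 := by
  rw [← gam_eq_range] at hd
  obtain ⟨w, hw⟩ := hd
  have hw1 : w = 1 := lift_eq_one_of_mem_range φ w (by rw [hw]; exact ⟨d, rfl⟩)
  rw [hw1, map_one] at hw
  have hd1 : (HNNExtension.of d : HNNExtension (DihedralGroup n) _ _ φ) =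
      HNNExtension.of (1 : DihedralGroup n) := by
    rw [map_one, ← hw]
  exact HNNExtension.of_injective φ hd1

theorem gam_free [NeZero n] :
    Nonempty ((Gam φ) ≃* FreeGroup (Fin n)) :=
  ⟨(MulEquiv.subgroupCongr (gam_eq_range φ).symm).trans
    (MonoidHom.ofInjective (inj_lift φ)).symm⟩

variable (hφ : (φ ⟨DihedralGroup.sr 0, Subgroup.subset_closure (Set.mem_singleton _)⟩ :
        DihedralGroup n) = DihedralGroup.r 1 * DihedralGroup.sr 0)
include hφ

theorem gam_index [NeZero n] (hn : 0 < n) : (Gam φ).index = 2 * n := by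
  have hbij : Function.Bijective (fun d : DihedralGroup n =>
      (QuotientGroup.mk (HNNExtension.of d) :
        HNNExtension (DihedralGroup n) _ _ φ ⧸ Gam φ)) := by
    constructor
    · intro d1 d2 h12
      rw [QuotientGroup.eq] at h12
      have h2 : HNNExtension.of (d1⁻¹ * d2) ∈ Gam φ := by
        rw [map_mul, map_inv]; exact h12
      have h3 := of_mem_Gam φ h2
      rwa [inv_mul_eq_one] at h3
    · intro q
      induction q using QuotientGroup.induction_on with
      | H g =>
        obtain ⟨d, γ, hγ, hg⟩ := all_mem_Pcar φ hφ hn g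
        refine ⟨d, ?_⟩
        rw [hg]
        exact (QuotientGroup.eq).mpr (by rw [inv_mul_cancel_left]; exact hγ)
  calc (Gam φ).index
      = Nat.card (HNNExtension (DihedralGroup n) _ _ φ ⧸ Gam φ) := rfl
    _ = Nat.card (DihedralGroup n) := (Nat.card_congr (Equiv.ofBijective _ hbij)).symm
    _ = 2 * n := by rw [Nat.card_eq_fintype_card, DihedralGroup.card]

theorem s_t_s : sK φ * t * (sK φ)⁻¹ =
    (HNNExtension.of (r 1) : HNNExtension (DihedralGroup n) _ _ φ)⁻¹ * t := by
  have h := t_mul_s φ hφ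
  have hsinv : (sK φ)⁻¹ = sK φ := inv_eq_of_mul_eq_one_right (s_mul_s φ)
  calc sK φ * t * (sK φ)⁻¹ = sK φ * (t * sK φ) := by rw [hsinv]; group
    _ = sK φ * (sK φ * (HNNExtension.of (r 1))⁻¹ * t) := by rw [h]
    _ = (sK φ * sK φ) * ((HNNExtension.of (r 1))⁻¹ * t) := by group
    _ = (HNNExtension.of (r 1))⁻¹ * t := by rw [s_mul_s φ]; group

theorem gam_not_normal [NeZero n] (hn : 2 ≤ n) : ¬ (Gam φ).Normal := by
  intro hN
  have hn0 : 0 < n := by omega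
  have ht : (t : HNNExtension (DihedralGroup n) _ _ φ) ∈ Gam φ := by
    have h0 := X_mem_Gam φ hn0 0
    rwa [X_def, neg_zero, zpow_zero, one_mul, mul_one] at h0
  have hconj := hN.conj_mem t ht (sK φ)
  rw [s_t_s φ hφ] at hconj
  have ha : (HNNExtension.of (r 1) : HNNExtension (DihedralGroup n) _ _ φ)⁻¹ ∈ Gam φ := by
    have := mul_mem hconj (inv_mem ht)
    rwa [mul_assoc, mul_inv_cancel, mul_one] at this
  rw [← map_inv] at ha
  have h1 := of_mem_Gam φ ha
  rw [inv_eq_one] at h1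
  rw [one_def] at h1
  have h2 : (1 : ZMod n) = 0 := r.inj h1
  have h3 : ((1 : ℕ) : ZMod n) = 0 := by exact_mod_cast h2
  rw [ZMod.natCast_eq_zero_iff] at h3
  exact absurd (Nat.le_of_dvd one_pos h3) (by omega)

end Final
end HNNSchottky

open HNNExtension

/-- In the HNN extension `K` of `Dₙ = ⟨A,B⟩` (`A = r 1`, `B = sr 0`,
`n ≥ 2` even) by the stable letter `T = t` with `T B T⁻¹ = AB`, the subgroup `Γ`
generated by the conjugates `Aᵏ T A⁻ᵏ` (`k = 0,…,n−1`) has index `2n`, is free of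
rank `n`, but is not normal in `K`. -/
theorem hnn_dihedral_even_schottky_subgroup (n : ℕ) (hn : 2 ≤ n) (heven : Even n)
    (φ : (Subgroup.closure {DihedralGroup.sr 0} : Subgroup (DihedralGroup n)) ≃*
      (Subgroup.closure {DihedralGroup.r 1 * DihedralGroup.sr 0} : Subgroup (DihedralGroup n)))
    (hφ : (φ ⟨DihedralGroup.sr 0, Subgroup.subset_closure (Set.mem_singleton _)⟩ :
        DihedralGroup n) = DihedralGroup.r 1 * DihedralGroup.sr 0)
    (Γ : Subgroup (HNNExtension (DihedralGroup n) _ _ φ))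
    (hΓ : Γ = Subgroup.closure
      { x | ∃ k : ℕ, k < n ∧
          x = (HNNExtension.of (DihedralGroup.r 1)) ^ k * HNNExtension.t *
              ((HNNExtension.of (DihedralGroup.r 1)) ^ k)⁻¹ }) :
    Γ.index = 2 * n ∧ Nonempty (Γ ≃* FreeGroup (Fin n)) ∧ ¬ Γ.Normal := by
  haveI : NeZero n := ⟨by omega⟩
  have hΓ' : Γ = HNNSchottky.Gam φ := hΓ
  subst hΓ'
  exact ⟨HNNSchottky.gam_index φ hφ (by omega),
    HNNSchottky.gam_free φ,
    HNNSchottky.gam_not_normal φ hφ hn⟩
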